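/- Let X be a topological space which is not a topological sum of connected spaces, i.e., there exists a point a ∈ X such that no open neighbourhood of a is connected. Then there exist a Hausdorff prime space P and a quotient map f : X → P. -/

import Mathlib

open Topology

universe u v w

/-- A class of topological spaces (underlying types in a fixed universe). -/
def SpaceClass : Type (u + 1) :=
  ∀ (X : Type u), TopologicalSpace X → Prop

/-- Closedness under homeomorphic copies. -/
def ClosedUnderHomeo (ℬ : SpaceClass.{u}) : Prop :=
  ∀ (X Y : Type u) (tX : TopologicalSpace X) (tY : TopologicalSpace Y),
    Nonempty (@Homeomorph X Y tX tY) → ℬ X tX → ℬ Y tY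

/-- An epireflective class: closed under homeomorphic copies, subspaces and
set-indexed topological products. -/
structure IsEpireflectiveClass (𝒜 : SpaceClass.{u}) : Prop where
  homeo : ClosedUnderHomeo 𝒜
  subspace : ∀ (X : Type u) (tX : TopologicalSpace X) (s : Set X),
    𝒜 X tX → 𝒜 s (TopologicalSpace.induced (Subtype.val : s → X) tX)
  prod : ∀ (ι : Type u) (Y : ι → Type u) (t : ∀ i, TopologicalSpace (Y i)),
    (∀ i, 𝒜 (Y i) (t i)) → 𝒜 (∀ i, Y i) (@Pi.topologicalSpace ι Y t)

/-- The disjoint-union (topological sum) topology on a sigma type. -/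
def sigmaTop {ι : Type v} (Y : ι → Type w) (t : ∀ i, TopologicalSpace (Y i)) :
    TopologicalSpace (Σ i, Y i) :=
  ⨆ i, TopologicalSpace.coinduced (Sigma.mk i) (t i)

/-- An AD-class in `𝒜`: a subclass of `𝒜` closed under homeomorphic copies, closed
under topological sums of arbitrary families of its members, and divisible in `𝒜`
(quotients in `𝒜` of members of `ℬ` belong to `ℬ`). -/
structure IsADClass (𝒜 ℬ : SpaceClass.{u}) : Prop where
  subset : ∀ (X : Type u) (tX : TopologicalSpace X), ℬ X tX → 𝒜 X tX
  homeo : ClosedUnderHomeo ℬ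
  sums : ∀ (ι : Type u) (Y : ι → Type u) (t : ∀ i, TopologicalSpace (Y i)),
    (∀ i, ℬ (Y i) (t i)) → ℬ (Σ i, Y i) (sigmaTop Y t)
  divisible : ∀ (X Z : Type u) (tX : TopologicalSpace X) (tZ : TopologicalSpace Z)
    (q : X → Z), ℬ X tX → 𝒜 Z tZ → @IsQuotientMap X Z tX tZ q → ℬ Z tZ

/-- A class is hereditary if every nonempty subspace of each member belongs to it. -/
def IsHereditary (ℬ : SpaceClass.{u}) : Prop :=
  ∀ (X : Type u) (tX : TopologicalSpace X) (s : Set X), s.Nonempty → ℬ X tX →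
    ℬ s (TopologicalSpace.induced (Subtype.val : s → X) tX)

/-- The prime factor `X_a`: the topology on the underlying set of `X` whose open sets
are exactly the sets `U` such that `a ∈ U` implies `U` is a neighbourhood of `a`. -/
def primeFactor {X : Type u} (t : TopologicalSpace X) (a : X) : TopologicalSpace X where
  IsOpen U := a ∈ U → U ∈ @nhds X t a
  isOpen_univ := fun _ => Filter.univ_mem
  isOpen_inter := fun U V hU hV h => Filter.inter_mem (hU h.1) (hV h.2)
  isOpen_sUnion := fun S hS h => by
    obtain ⟨U, hU, haU⟩ := h
    exact Filter.mem_of_superset (hS U hU haU) (Set.subset_sUnion_of_mem hU)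

/-- A prime space: a topological space with exactly one non-isolated point. -/
def IsPrimeSpace (X : Type u) (t : TopologicalSpace X) : Prop :=
  ∃! a : X, ¬ @IsOpen X t {a}

section AuxStmt11

variable {X : Type u} [TopologicalSpace X]

private theorem split_core {a : X} {Q u v : Set X} (hQ : IsClopen Q)
    (hu : IsOpen u) (hv : IsOpen v) (hQuv : Q ⊆ u ∪ v) (hnev : (Q ∩ v).Nonempty)
    (hdisj : Q ∩ (u ∩ v) = ∅) (haQ : a ∈ Q) (hau : a ∈ u) :
    ∃ V : Set X, IsClopen V ∧ a ∈ V ∧ V ⊆ Q ∧ (Q \ V).Nonempty := by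
  refine ⟨Q ∩ u, ?_, ⟨haQ, hau⟩, Set.inter_subset_left, ?_⟩
  · have hQu : Q ∩ u = Q \ v := by
      ext x
      constructor
      · rintro ⟨hxQ, hxu⟩
        refine ⟨hxQ, fun hxv => ?_⟩
        have : x ∈ Q ∩ (u ∩ v) := ⟨hxQ, hxu, hxv⟩
        simp [hdisj] at this
      · rintro ⟨hxQ, hxv⟩
        rcases hQuv hxQ with hx | hx
        · exact ⟨hxQ, hx⟩
        · exact absurd hx hxv
    constructor
    · rw [hQu]; exact hQ.isClosed.sdiff hv
    · exact hQ.isOpen.inter hu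
  · obtain ⟨y, hyQ, hyv⟩ := hnev
    refine ⟨y, hyQ, fun hy => ?_⟩
    have : y ∈ Q ∩ (u ∩ v) := ⟨hyQ, hy.2, hyv⟩
    simp [hdisj] at this

private theorem exists_split (a : X)
    (h : ∀ U : Set X, IsOpen U → a ∈ U → ¬ IsConnected U)
    {Q : Set X} (hQ : IsClopen Q) (haQ : a ∈ Q) :
    ∃ V : Set X, IsClopen V ∧ a ∈ V ∧ V ⊆ Q ∧ (Q \ V).Nonempty := by
  have hnc := h Q hQ.isOpen haQ
  rw [IsConnected] at hnc
  push_neg at hnc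
  have hpc := hnc ⟨a, haQ⟩
  rw [IsPreconnected] at hpc
  push_neg at hpc
  obtain ⟨u, v, hu, hv, hQuv, hneu, hnev, hdisj⟩ := hpc
  rcases hQuv haQ with hau | hav
  · exact split_core hQ hu hv hQuv hnev hdisj haQ hau
  · have hQvu : Q ⊆ v ∪ u := by rw [Set.union_comm]; exact hQuv
    have hdisj' : Q ∩ (v ∩ u) = ∅ := by rw [Set.inter_comm v u]; exact hdisj
    exact split_core hQ hv hu hQvu hneu hdisj' haQ hav

variable (a : X) (h : ∀ U : Set X, IsOpen U → a ∈ U → ¬ IsConnected U)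

open Classical in
/-- Choice of a strictly smaller clopen neighbourhood of `a`. -/
private noncomputable def nextSet (Q : Set X) : Set X :=
  if hQ : IsClopen Q ∧ a ∈ Q then (exists_split a h hQ.1 hQ.2).choose else Q

private theorem nextSet_subset (Q : Set X) : nextSet a h Q ⊆ Q := by
  rw [nextSet]
  split_ifs with hQ
  · exact (exists_split a h hQ.1 hQ.2).choose_spec.2.2.1
  · exact subset_rfl

private theorem nextSet_spec {Q : Set X} (hQ : IsClopen Q) (haQ : a ∈ Q) :
    IsClopen (nextSet a h Q) ∧ a ∈ nextSet a h Q ∧ (Q \ nextSet a h Q).Nonempty := by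
  rw [nextSet, dif_pos ⟨hQ, haQ⟩]
  obtain ⟨h1, h2, _, h4⟩ := (exists_split a h hQ haQ).choose_spec
  exact ⟨h1, h2, h4⟩

private theorem nextSet_mem_closed {Q : Set X} (haQ : a ∈ Q) (hQ : IsClosed Q) :
    a ∈ nextSet a h Q ∧ IsClosed (nextSet a h Q) := by
  rw [nextSet]
  split_ifs with hQ'
  · obtain ⟨h1, h2, _, _⟩ := (exists_split a h hQ'.1 hQ'.2).choose_spec
    exact ⟨h2, h1.isClosed⟩
  · exact ⟨haQ, hQ⟩

/-- The transfinite decreasing sequence of clopen neighbourhoods of `a`. -/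
private noncomputable def Cseq : Ordinal.{u} → Set X := fun o =>
  Ordinal.limitRecOn o Set.univ (fun _ ih => nextSet a h ih)
    (fun o _ ih => ⋂ (p : {p : Ordinal.{u} // p < o}), ih p p.2)

private theorem Cseq_zero : Cseq a h 0 = Set.univ :=
  Ordinal.limitRecOn_zero _ _ _

private theorem Cseq_succ (o : Ordinal.{u}) :
    Cseq a h (Order.succ o) = nextSet a h (Cseq a h o) :=
  Ordinal.limitRecOn_succ _ _ _ _

private theorem Cseq_limit {o : Ordinal.{u}} (ho : Order.IsSuccLimit o) :
    Cseq a h o = ⋂ (p : {p : Ordinal.{u} // p < o}), Cseq a h p :=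
  Ordinal.limitRecOn_limit _ _ _ _ ho

private theorem Cseq_mem_closed (o : Ordinal.{u}) :
    a ∈ Cseq a h o ∧ IsClosed (Cseq a h o) := by
  induction o using Ordinal.limitRecOn with
  | zero => rw [Cseq_zero]; exact ⟨Set.mem_univ a, isClosed_univ⟩
  | add_one o ih =>
    rw [Ordinal.add_one_eq_succ, Cseq_succ]
    exact nextSet_mem_closed a h ih.1 ih.2
  | limit o ho ih =>
    rw [Cseq_limit a h ho]
    exact ⟨Set.mem_iInter.2 fun p => (ih p p.2).1,
      isClosed_iInter fun p => (ih p p.2).2⟩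

private theorem Cseq_anti : ∀ β α : Ordinal.{u}, α ≤ β → Cseq a h β ⊆ Cseq a h α := by
  intro β
  induction β using Ordinal.limitRecOn with
  | zero => intro α hα; rw [nonpos_iff_eq_zero.1 hα]
  | add_one o ih =>
    rw [Ordinal.add_one_eq_succ]
    intro α hα
    rcases Order.le_succ_iff_eq_or_le.1 hα with rfl | hα
    · exact subset_rfl
    · rw [Cseq_succ]
      exact (nextSet_subset a h _).trans (ih α hα)
  | limit o ho ih =>
    intro α hα
    rcases eq_or_lt_of_le hα with rfl | hα
    · exact subset_rfl
    · rw [Cseq_limit a h ho]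
      exact Set.iInter_subset (fun p : {p : Ordinal.{u} // p < o} => Cseq a h p) ⟨α, hα⟩

private theorem Cseq_strict {o : Ordinal.{u}} (ho : IsClopen (Cseq a h o)) :
    IsClopen (Cseq a h (Order.succ o)) ∧
      (Cseq a h o \ Cseq a h (Order.succ o)).Nonempty := by
  rw [Cseq_succ]
  obtain ⟨h1, _, h3⟩ := nextSet_spec a h ho (Cseq_mem_closed a h o).1
  exact ⟨h1, h3⟩

private theorem Cseq_exists_not_open : ∃ o : Ordinal.{u}, ¬ IsOpen (Cseq a h o) := by
  by_contra hall
  push_neg at hall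
  have hclopen : ∀ o : Ordinal.{u}, IsClopen (Cseq a h o) := fun o =>
    ⟨(Cseq_mem_closed a h o).2, hall o⟩
  have hinj : Function.Injective (Cseq a h) := by
    intro α β hαβ
    by_contra hne
    rcases lt_or_gt_of_ne hne with hlt | hlt
    · obtain ⟨x, hx1, hx2⟩ := (Cseq_strict a h (hclopen α)).2
      exact hx2 (Cseq_anti a h β (Order.succ α) (Order.succ_le_of_lt hlt)
        (hαβ ▸ hx1))
    · obtain ⟨x, hx1, hx2⟩ := (Cseq_strict a h (hclopen β)).2
      exact hx2 (Cseq_anti a h α (Order.succ β) (Order.succ_le_of_lt hlt)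
        (hαβ.symm ▸ hx1))
  exact not_injective_of_ordinal (Cseq a h) hinj

end AuxStmt11

/-- If some point `a` of `X` has no connected open neighbourhood
(i.e. `X` is not a topological sum of connected spaces), then there is a quotient
map from `X` onto a Hausdorff prime space. -/
theorem statement11 {X : Type u} [TopologicalSpace X] (a : X)
    (h : ∀ U : Set X, IsOpen U → a ∈ U → ¬ IsConnected U) :
    ∃ (P : Type u) (tP : TopologicalSpace P) (f : X → P),
      @T2Space P tP ∧ IsPrimeSpace P tP ∧ @IsQuotientMap X P _ tP f := by
  classical
  -- `l` : the first stage at which the sequence is no longer open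
  set S : Set Ordinal.{u} := {o | ¬ IsOpen (Cseq a h o)} with hS
  have hSne : S.Nonempty := Cseq_exists_not_open a h
  set l : Ordinal.{u} := sInf S with hldef
  have hlmem : ¬ IsOpen (Cseq a h l) := csInf_mem hSne
  have hlt_open : ∀ α < l, IsOpen (Cseq a h α) := by
    intro α hα
    by_contra hno
    exact absurd (csInf_le (OrderBot.bddBelow S) hno) (not_le_of_gt hα)
  have hlt_clopen : ∀ α < l, IsClopen (Cseq a h α) := fun α hα =>
    ⟨(Cseq_mem_closed a h α).2, hlt_open α hα⟩
  have hl_limit : Order.IsSuccLimit l := by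
    rcases Ordinal.zero_or_succ_or_isSuccLimit l with h0 | ⟨μ, hμ⟩ | hlim
    · exfalso; apply hlmem; rw [h0, Cseq_zero]; exact isOpen_univ
    · exfalso
      have hμl : μ < l := by rw [← hμ]; exact Order.lt_succ μ
      have hcl := (Cseq_strict a h (hlt_clopen μ hμl)).1
      rw [← hμ] at hlmem
      exact hlmem hcl.isOpen
    · exact hlim
  -- the grading function
  set g : X → Ordinal.{u} := fun x =>
    if x ∈ Cseq a h l then l else sInf {β | x ∉ Cseq a h (Order.succ β)} with hgdef
  have hsubl : ∀ α : Ordinal.{u}, Cseq a h (Order.succ α) ⊆ Cseq a h α :=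
    fun α => Cseq_anti a h _ _ (Order.le_succ α)
  have hgl : ∀ x, x ∈ Cseq a h l → g x = l := fun x hx => if_pos hx
  have hTl : ∀ x, x ∉ Cseq a h l → l ∈ {β | x ∉ Cseq a h (Order.succ β)} :=
    fun x hx hmem => hx (hsubl l hmem)
  have hgval : ∀ x, x ∉ Cseq a h l → g x = sInf {β | x ∉ Cseq a h (Order.succ β)} :=
    fun x hx => if_neg hx
  have hg_lt : ∀ x, x ∉ Cseq a h l → g x < l := by
    intro x hx
    have hx' := hx
    rw [Cseq_limit a h hl_limit, Set.mem_iInter] at hx'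
    push_neg at hx'
    obtain ⟨p, hp⟩ := hx'
    have hpT : (p : Ordinal.{u}) ∈ {β | x ∉ Cseq a h (Order.succ β)} :=
      fun hmem => hp (hsubl p hmem)
    calc g x = sInf {β | x ∉ Cseq a h (Order.succ β)} := hgval x hx
      _ ≤ p := csInf_le (OrderBot.bddBelow _) hpT
      _ < l := p.2
  have hg_le : ∀ x, g x ≤ l := by
    intro x
    by_cases hx : x ∈ Cseq a h l
    · exact le_of_eq (hgl x hx)
    · exact le_of_lt (hg_lt x hx)
  have hnotmem : ∀ x, x ∉ Cseq a h l → x ∉ Cseq a h (Order.succ (g x)) := by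
    intro x hx
    have : g x ∈ {β | x ∉ Cseq a h (Order.succ β)} := by
      rw [hgval x hx]
      exact csInf_mem ⟨l, hTl x hx⟩
    exact this
  have hmem_lt : ∀ x, x ∉ Cseq a h l → ∀ β, β < g x → x ∈ Cseq a h (Order.succ β) := by
    intro x hx β hβ
    by_contra hc
    have : g x ≤ β := by
      rw [hgval x hx]
      exact csInf_le (OrderBot.bddBelow _) hc
    exact absurd hβ (not_lt_of_ge this)
  have hmem_self : ∀ x, x ∉ Cseq a h l → x ∈ Cseq a h (g x) := by
    intro x hx
    rcases Ordinal.zero_or_succ_or_isSuccLimit (g x) with h0 | ⟨γ, hγ⟩ | hlim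
    · rw [h0, Cseq_zero]; trivial
    · have hγlt : γ < g x := by rw [← hγ]; exact Order.lt_succ γ
      rw [← hγ]
      exact hmem_lt x hx γ hγlt
    · rw [Cseq_limit a h hlim, Set.mem_iInter]
      rintro ⟨p, hp⟩
      exact hsubl p (hmem_lt x hx p hp)
  have hfiber : ∀ (x : X) (α : Ordinal.{u}), α < l →
      (g x = α ↔ (x ∈ Cseq a h α ∧ x ∉ Cseq a h (Order.succ α))) := by
    intro x α hα
    constructor
    · intro hgx
      have hx : x ∉ Cseq a h l := by
        intro hm
        rw [hgl x hm] at hgx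
        exact absurd hgx.symm (ne_of_lt hα)
      exact ⟨hgx ▸ hmem_self x hx, hgx ▸ hnotmem x hx⟩
    · rintro ⟨hx1, hx2⟩
      have hx : x ∉ Cseq a h l := fun hm =>
        hx2 (Cseq_anti a h l (Order.succ α) (Order.succ_le_of_lt hα) hm)
      have h1 : g x ≤ α := by
        rw [hgval x hx]
        exact csInf_le (OrderBot.bddBelow _) hx2
      have h2 : α ≤ g x := by
        by_contra hc
        push_neg at hc
        exact hnotmem x hx
          (Cseq_anti a h α (Order.succ (g x)) (Order.succ_le_of_lt hc) hx1)
      exact le_antisymm h1 h2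
  -- openness of the fibers of `g` below `l`
  have hfo : ∀ α : Ordinal.{u}, α < l →
      IsOpen {x | g x = α} ∧ IsOpen {x | g x ≠ α} := by
    intro α hα
    have he1 : {x | g x = α} = Cseq a h α \ Cseq a h (Order.succ α) := by
      ext x
      simpa using hfiber x α hα
    have he2 : {x | g x ≠ α} = (Cseq a h α)ᶜ ∪ Cseq a h (Order.succ α) := by
      ext x
      simp only [Set.mem_setOf_eq, Set.mem_union, Set.mem_compl_iff]
      rw [ne_eq, hfiber x α hα]
      tauto
    constructor
    · rw [he1]
      exact (hlt_open α hα).sdiff (Cseq_mem_closed a h _).2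
    · rw [he2]
      exact ((Cseq_mem_closed a h α).2.isOpen_compl).union
        (hlt_open _ (hl_limit.succ_lt hα))
  -- the quotient space
  let r : X → X → Prop := fun x y => g x = g y
  let f : X → Quot r := Quot.mk r
  let gbar : Quot r → Ordinal.{u} := Quot.lift g (fun _ _ hxy => hxy)
  have hgbar : ∀ x, gbar (f x) = g x := fun _ => rfl
  have hker : ∀ x y, f x = f y ↔ g x = g y := by
    intro x y
    constructor
    · intro e
      have := congrArg gbar e
      simpa [hgbar] using this
    · exact fun e => Quot.sound e
  refine ⟨Quot r, TopologicalSpace.coinduced f (inferInstance : TopologicalSpace X),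
    f, ?_, ?_, ?_⟩
  · -- Hausdorff
    have key : ∀ x y : X, g x ≠ g y → g x < l →
        ∃ u v : Set (Quot r),
          IsOpen[TopologicalSpace.coinduced f (inferInstance : TopologicalSpace X)] u ∧
          IsOpen[TopologicalSpace.coinduced f (inferInstance : TopologicalSpace X)] v ∧
          f x ∈ u ∧ f y ∈ v ∧ Disjoint u v := by
      intro x y hne hxl
      refine ⟨{p | gbar p = g x}, {p | gbar p ≠ g x}, ?_, ?_, rfl, ?_, ?_⟩
      · rw [isOpen_coinduced]
        exact (hfo (g x) hxl).1
      · rw [isOpen_coinduced]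
        exact (hfo (g x) hxl).2
      · exact fun e => hne ((hgbar y) ▸ e).symm
      · rw [Set.disjoint_left]
        exact fun p hp hq => hq hp
    constructor
    intro p q hpq
    obtain ⟨x, rfl⟩ := Quot.exists_rep p
    obtain ⟨y, rfl⟩ := Quot.exists_rep q
    have hgxy : g x ≠ g y := fun e => hpq (Quot.sound e)
    rcases lt_or_eq_of_le (hg_le x) with hxl | hxl
    · exact key x y hgxy hxl
    · have hyl : g y < l := lt_of_le_of_ne (hg_le y) (fun e => hgxy (by rw [hxl, e]))
      obtain ⟨u, v, hu, hv, hyu, hxv, hdj⟩ := key y x (Ne.symm hgxy) hyl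
      exact ⟨v, u, hv, hu, hxv, hyu, hdj.symm⟩
  · -- prime space
    have ga : g a = l := hgl a (Cseq_mem_closed a h l).1
    have hpre : ∀ x : X, f ⁻¹' {f x} = {y | g y = g x} := by
      intro x
      ext y
      simp only [Set.mem_preimage, Set.mem_singleton_iff, Set.mem_setOf_eq]
      exact hker y x
    refine ⟨f a, ?_, ?_⟩
    · -- {f a} is not open
      intro hopen
      rw [isOpen_coinduced, hpre a, ga] at hopen
      have : {y | g y = l} = Cseq a h l := by
        ext y
        simp only [Set.mem_setOf_eq]
        constructor
        · intro hy
          by_contra hc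
          exact absurd hy (ne_of_lt (hg_lt y hc))
        · exact hgl y
      rw [this] at hopen
      exact hlmem hopen
    · -- uniqueness
      intro b hb
      obtain ⟨x, rfl⟩ := Quot.exists_rep b
      have hxl : g x = l := by
        by_contra hc
        apply hb
        rw [isOpen_coinduced, hpre x]
        exact (hfo (g x) (lt_of_le_of_ne (hg_le x) hc)).1
      exact Quot.sound (by rw [hxl, ga] : g x = g a)
  · -- quotient map
    exact ⟨⟨rfl⟩, fun p => Quot.exists_rep p⟩
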